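/- arXiv:2604.24747 — 2 statements merged into one kernel-verified Lean document; each statement's English description precedes it below -/
import Mathlib

section
/- Let $p_1,\ldots,p_n$ be analytic at $0$ with $p_i(0)=1$, set $P_1=p_1$ and $P_i = p_i/p_{i-1}$ for $i\ge 2$. For indices $1\le j \le i \le n$, the nested multiple contour integral $\oint\frac{dv_1}{2\pi i}\cdots\oint\frac{dv_j}{2\pi i}\; \frac{v_1^{i-1} p_i(v_1)}{\left[\prod_{\ell=1}^{j-1}(v_\ell - v_{\ell+1})\right]\cdot\left[\prod_{\ell=1}^{j} v_\ell P_\ell(v_\ell)\right]}$ over nested small circles $|v_1| > \cdots > |v_j|$ around the origin equals $\delta_{ij}$ (i.e., equals $1$ if $i=j$ and $0$ if $i>j$). -/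
open Finset

/-- `(2πi)⁻¹ ∮_{|v|=r} f(v) dv`. -/
noncomputable def cInt (r : ℝ) (f : ℂ → ℂ) : ℂ :=
  (2 * Real.pi * Complex.I)⁻¹ * ∮ v in C(0, r), f v

/-- Iterated (nested) contour integrals: `j` counterclockwise circles around `0` of radii
`r 0 > r 1 > ⋯ > r (j-1)`, the variable `v k` running over the circle of radius `r k`,
each integral carrying the factor `(2πi)⁻¹`. -/
noncomputable def nestedCI : ℕ → (ℕ → ℝ) → ((ℕ → ℂ) → ℂ) → ℂ
  | 0, _, F => F fun _ => 0
  | j+1, r, F => cInt (r 0) fun v =>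
      nestedCI j (fun k => r (k+1)) fun w => F fun k => match k with
        | 0 => v
        | k+1 => w k

open Metric Complex MeasureTheory Set Filter

namespace S8

lemma nestedCI_succ (j : ℕ) (r : ℕ → ℝ) (F : (ℕ → ℂ) → ℂ) :
    nestedCI (j+1) r F = cInt (r 0) fun v =>
      nestedCI j (fun k => r (k+1)) fun w => F fun k => match k with
        | 0 => v
        | k+1 => w k := rfl

lemma cInt_congr {r : ℝ} (hr : 0 ≤ r) {f g : ℂ → ℂ} (h : Set.EqOn f g (sphere (0:ℂ) r)) :
    cInt r f = cInt r g := by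
  unfold cInt; rw [circleIntegral.integral_congr hr h]

lemma cInt_const_mul (r : ℝ) (c : ℂ) (f : ℂ → ℂ) :
    cInt r (fun v => c * f v) = c * cInt r f := by
  unfold cInt; rw [circleIntegral.integral_const_mul]; ring

lemma nestedCI_const_mul : ∀ (j : ℕ) (r : ℕ → ℝ) (c : ℂ) (F : (ℕ → ℂ) → ℂ),
    nestedCI j r (fun w => c * F w) = c * nestedCI j r F
  | 0, r, c, F => rfl
  | j+1, r, c, F => by
    rw [nestedCI_succ, nestedCI_succ, ← cInt_const_mul]
    congr 1; funext v
    exact nestedCI_const_mul j _ c _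

lemma nestedCI_congr : ∀ (j : ℕ) (r : ℕ → ℝ), (∀ k, 0 ≤ r k) → ∀ {F G : (ℕ → ℂ) → ℂ},
    (∀ w : ℕ → ℂ, (∀ k, k < j → ‖w k‖ = r k) → (∀ k, j ≤ k → w k = 0) → F w = G w) →
    nestedCI j r F = nestedCI j r G
  | 0, r, _, F, G, h => h _ (fun k hk => absurd hk (Nat.not_lt_zero k)) (fun _ _ => rfl)
  | j+1, r, hr, F, G, h => by
    rw [nestedCI_succ, nestedCI_succ]
    refine cInt_congr (hr 0) fun v hv => ?_
    refine nestedCI_congr j _ (fun k => hr (k+1)) fun w h1 h2 => ?_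
    refine h _ ?_ ?_
    · intro k hk
      cases k with
      | zero =>
        simp only [mem_sphere_iff_norm, sub_zero] at hv
        simpa using hv
      | succ k => exact h1 k (Nat.lt_of_succ_lt_succ hk)
    · intro k hk
      cases k with
      | zero => omega
      | succ k => exact h2 k (Nat.le_of_succ_le_succ hk)

lemma cInt_cauchy {r : ℝ} {g : ℂ → ℂ} (hg : DifferentiableOn ℂ g (closedBall 0 r))
    {w : ℂ} (hw : w ∈ ball (0:ℂ) r) : cInt r (fun z => (z - w)⁻¹ * g z) = g w := by
  unfold cInt
  have h := DifferentiableOn.circleIntegral_sub_inv_smul hg hw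
  simp only [smul_eq_mul] at h
  rw [h, inv_mul_cancel_left₀ Complex.two_pi_I_ne_zero]

lemma cInt_zero_of_diff {r : ℝ} (hr : 0 ≤ r) {g : ℂ → ℂ} (hc : ContinuousOn g (closedBall 0 r))
    (hd : ∀ z ∈ ball (0:ℂ) r, DifferentiableAt ℂ g z) : cInt r g = 0 := by
  unfold cInt
  rw [Complex.circleIntegral_eq_zero_of_differentiable_on_off_countable hr Set.countable_empty hc
    (fun z hz => hd z hz.1), mul_zero]


lemma cInt_param_continuous {X : Type*} [TopologicalSpace X] [LocallyCompactSpace X] [FirstCountableTopology X]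
    {r : ℝ} {F : X → ℂ → ℂ} (hF : Continuous fun p : X × ℝ => F p.1 (circleMap 0 r p.2)) :
    Continuous fun x => cInt r (F x) := by
  have hG : Continuous fun p : X × ℝ =>
      deriv (circleMap 0 r) p.2 • F p.1 (circleMap 0 r p.2) := by
    simp only [deriv_circleMap, smul_eq_mul]
    exact (((continuous_circleMap 0 r).comp continuous_snd).mul continuous_const).mul hF
  unfold cInt circleIntegral
  refine continuous_const.mul ?_
  rw [continuous_iff_continuousAt]
  intro x₀
  obtain ⟨K, hKc, hKn⟩ := exists_compact_mem_nhds x₀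
  obtain ⟨C, hC⟩ := (hKc.prod (isCompact_Icc (a := (0:ℝ))
    (b := 2*Real.pi))).exists_bound_of_continuousOn hG.continuousOn
  refine intervalIntegral.continuousAt_of_dominated_interval
    (Eventually.of_forall fun x =>
      (hG.comp (Continuous.prodMk_right x)).aestronglyMeasurable)
    ?_ (_root_.intervalIntegrable_const (c := C)) ?_
  · filter_upwards [hKn] with x hx
    refine Eventually.of_forall fun θ hθ => ?_
    rw [Set.uIoc_of_le Real.two_pi_pos.le] at hθ
    exact hC (x, θ) ⟨hx, Ioc_subset_Icc_self hθ⟩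
  · refine Eventually.of_forall fun θ _ => ?_
    exact (hG.comp (continuous_id.prodMk continuous_const)).continuousAt

lemma nestedCI_param_continuous {X : Type*} [TopologicalSpace X] [LocallyCompactSpace X] [FirstCountableTopology X] :
    ∀ (j : ℕ) (r : ℕ → ℝ) (F : X → (ℕ → ℂ) → ℂ),
    (Continuous fun p : X × (ℕ → ℝ) =>
      F p.1 (fun k => if k < j then circleMap 0 (r k) (p.2 k) else 0)) →
    Continuous fun x => nestedCI j r (F x)
  | 0, r, F, hF => by
    simp only [Nat.not_lt_zero, if_false] at hF
    show Continuous fun x => F x (fun _ => 0)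
    exact hF.comp (continuous_id.prodMk (continuous_const (y := fun _ : ℕ => (0:ℝ))))
  | j+1, r, F, hF => by
    simp only [nestedCI_succ]
    apply cInt_param_continuous (X := X)
    apply nestedCI_param_continuous j (fun k => r (k+1))
      (fun (p : X × ℝ) w => F p.1 (fun k => match k with
        | 0 => circleMap 0 (r 0) p.2
        | k+1 => w k))
    have hg : Continuous fun q : (X × ℝ) × (ℕ → ℝ) =>
        ((q.1.1 : X), (fun k => match k with | 0 => q.1.2 | k+1 => q.2 k : ℕ → ℝ)) := by
      refine (continuous_fst.comp continuous_fst).prodMk (continuous_pi fun k => ?_)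
      cases k with
      | zero => exact continuous_snd.comp continuous_fst
      | succ k => exact (continuous_apply k).comp continuous_snd
    refine (hF.comp hg).congr fun q => ?_
    simp only [Function.comp_apply]
    congr 1
    funext k
    cases k with
    | zero => simp
    | succ k => simp [Nat.succ_lt_succ_iff]

lemma integral_swap_2pi {H : ℝ → ℝ → ℂ} (hH : Continuous fun p : ℝ × ℝ => H p.1 p.2) :
    ∫ θ in (0:ℝ)..(2*Real.pi), ∫ φ in (0:ℝ)..(2*Real.pi), H θ φ
      = ∫ φ in (0:ℝ)..(2*Real.pi), ∫ θ in (0:ℝ)..(2*Real.pi), H θ φ := by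
  have h2π : (0:ℝ) ≤ 2*Real.pi := Real.two_pi_pos.le
  simp only [intervalIntegral.integral_of_le h2π]
  have hInt : Integrable (Function.uncurry H)
      ((volume.restrict (Set.Ioc (0:ℝ) (2*Real.pi))).prod
        (volume.restrict (Set.Ioc (0:ℝ) (2*Real.pi)))) := by
    rw [Measure.prod_restrict, ← Measure.volume_eq_prod]
    refine IntegrableOn.mono_set ?_
      (Set.prod_mono Set.Ioc_subset_Icc_self Set.Ioc_subset_Icc_self)
    exact (hH.continuousOn).integrableOn_compact (isCompact_Icc.prod isCompact_Icc)
  exact MeasureTheory.integral_integral_swap hInt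


def cons (a : ℂ) (w : ℕ → ℂ) : ℕ → ℂ := fun k => match k with
  | 0 => a
  | k+1 => w k

@[simp] lemma cons_zero (a : ℂ) (w : ℕ → ℂ) : cons a w 0 = a := rfl
@[simp] lemma cons_succ (a : ℂ) (w : ℕ → ℂ) (k : ℕ) : cons a w (k+1) = w k := rfl

lemma nestedCI_succ' (j : ℕ) (r : ℕ → ℝ) (F : (ℕ → ℂ) → ℂ) :
    nestedCI (j+1) r F = cInt (r 0) fun v =>
      nestedCI j (fun k => r (k+1)) fun w => F (cons v w) := rfl

lemma nestedCI_zero (r : ℕ → ℝ) (F : (ℕ → ℂ) → ℂ) : nestedCI 0 r F = F (fun _ => 0) := rfl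

lemma cInt_def' (r : ℝ) (f : ℂ → ℂ) : cInt r f = (2 * Real.pi * Complex.I)⁻¹ *
    ∫ θ in (0:ℝ)..(2*Real.pi), (circleMap 0 r θ * Complex.I) * f (circleMap 0 r θ) := by
  unfold cInt circleIntegral
  simp only [deriv_circleMap, smul_eq_mul]

lemma cInt_swap {r s : ℝ} {H : ℂ → ℂ → ℂ}
    (hH : Continuous fun p : ℝ × ℝ => H (circleMap 0 r p.1) (circleMap 0 s p.2)) :
    cInt r (fun a => cInt s (fun b => H a b)) = cInt s (fun b => cInt r (fun a => H a b)) := by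
  have hmove : ∀ (z : ℂ) (g : ℝ → ℂ),
      z * ((2 * Real.pi * Complex.I)⁻¹ * ∫ φ in (0:ℝ)..(2*Real.pi), g φ)
      = (2 * Real.pi * Complex.I)⁻¹ * ∫ φ in (0:ℝ)..(2*Real.pi), z * g φ := by
    intro z g; rw [intervalIntegral.integral_const_mul]; ring
  have hmove2 : ∀ (g : ℝ → ℂ),
      (2 * Real.pi * Complex.I)⁻¹ * ∫ φ in (0:ℝ)..(2*Real.pi), g φ
      = ∫ φ in (0:ℝ)..(2*Real.pi), (2 * Real.pi * Complex.I)⁻¹ * g φ :=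
    fun g => (intervalIntegral.integral_const_mul _ _).symm
  have key := integral_swap_2pi (H := fun θ φ => (2 * Real.pi * Complex.I)⁻¹ *
      ((2 * Real.pi * Complex.I)⁻¹ * ((circleMap 0 r θ * Complex.I) *
      ((circleMap 0 s φ * Complex.I) * H (circleMap 0 r θ) (circleMap 0 s φ)))))
    (by
      refine continuous_const.mul (continuous_const.mul (Continuous.mul ?_ ?_))
      · exact ((continuous_circleMap 0 r).comp continuous_fst).mul continuous_const
      · exact (((continuous_circleMap 0 s).comp continuous_snd).mul continuous_const).mul hH)
  beta_reduce at key
  simp only [cInt_def']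
  refine Eq.trans ?_ (Eq.trans key ?_)
  · rw [← intervalIntegral.integral_const_mul]
    apply intervalIntegral.integral_congr
    intro θ _
    beta_reduce
    have h1 : ∀ (u v : ℂ) (g : ℝ → ℂ), u * (v * (u * ∫ φ in (0:ℝ)..(2*Real.pi), g φ))
        = (u * (v * u)) * ∫ φ in (0:ℝ)..(2*Real.pi), g φ := by intro u v g; ring
    rw [h1, ← intervalIntegral.integral_const_mul]
    apply intervalIntegral.integral_congr
    intro φ _
    ring
  · rw [← intervalIntegral.integral_const_mul]
    apply intervalIntegral.integral_congr
    intro φ _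
    beta_reduce
    have h1 : ∀ (u v : ℂ) (g : ℝ → ℂ), u * (v * (u * ∫ θ in (0:ℝ)..(2*Real.pi), g θ))
        = (u * (v * u)) * ∫ θ in (0:ℝ)..(2*Real.pi), g θ := by intro u v g; ring
    rw [h1, ← intervalIntegral.integral_const_mul]
    apply intervalIntegral.integral_congr
    intro θ _
    ring

lemma abs_of_sphere {t : ℝ} {z : ℂ} (h : z ∈ Metric.sphere (0:ℂ) t) : ‖z‖ = t := by
  rw [mem_sphere_iff_norm, sub_zero] at h
  exact h

lemma mem_cb {R₀ t : ℝ} {z : ℂ} (h : ‖z‖ = t) (ht : t ≤ R₀) :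
    z ∈ closedBall (0:ℂ) R₀ := by
  rw [mem_closedBall_zero_iff, h]; exact ht

lemma cont_comp_mem {R₀ : ℝ} {g : ℂ → ℂ} (hg : ∀ v ∈ closedBall (0:ℂ) R₀, AnalyticAt ℂ g v)
    {X : Type*} [TopologicalSpace X] {u : X → ℂ} (hu : Continuous u)
    (hmem : ∀ x, u x ∈ closedBall (0:ℂ) R₀) : Continuous fun x => g (u x) :=
  continuous_iff_continuousAt.2 fun x => ((hg _ (hmem x)).continuousAt).comp hu.continuousAt

noncomputable def Qd (q : ℕ → ℂ → ℂ) (ℓ : ℕ) (v : ℂ) : ℂ := if ℓ = 0 then q 0 v else q ℓ v / q (ℓ - 1) v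

lemma Qd_zero (q : ℕ → ℂ → ℂ) (v : ℂ) : Qd q 0 v = q 0 v := rfl
lemma Qd_succ (q : ℕ → ℂ → ℂ) (ℓ : ℕ) (v : ℂ) : Qd q (ℓ+1) v = q (ℓ+1) v / q ℓ v := rfl

lemma alg1 (a u p0 F D1 D2 : ℂ) (ha : a ≠ 0) (n : ℕ) :
    a ^ (n+1) * F / ((D1 * (a - u)) * (D2 * (a * p0))) =
      (a ^ n * F / p0) * ((a - u)⁻¹ * (D1 * D2)⁻¹) := by
  simp only [div_eq_mul_inv, mul_inv, pow_succ]
  linear_combination (a ^ n * F * D1⁻¹ * (a-u)⁻¹ * D2⁻¹ * p0⁻¹) * (mul_inv_cancel₀ ha)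

theorem aux {R₀ : ℝ} (hR₀ : 0 < R₀) :
    ∀ (j i : ℕ) (f : ℂ → ℂ) (q : ℕ → ℂ → ℂ) (r : ℕ → ℝ),
    j ≤ i →
    (∀ v ∈ closedBall (0:ℂ) R₀, AnalyticAt ℂ f v) →
    (∀ ℓ, ∀ v ∈ closedBall (0:ℂ) R₀, AnalyticAt ℂ (q ℓ) v ∧ q ℓ v ≠ 0) →
    (∀ k, 0 < r k) → (∀ k, r k < R₀) → (∀ k, r (k+1) < r k) →
    nestedCI (j+1) r (fun v => v 0 ^ i * f (v 0) /
      ((∏ ℓ ∈ Finset.range j, (v ℓ - v (ℓ+1))) *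
        ∏ ℓ ∈ Finset.range (j+1), (v ℓ * Qd q ℓ (v ℓ)))) =
      if i = j then f 0 / q j 0 else 0 := by
  intro j
  induction j with
  | zero =>
    intro i f q r _ hf hq hr1 hr2 _
    have hsub : closedBall (0:ℂ) (r 0) ⊆ closedBall 0 R₀ :=
      closedBall_subset_closedBall (hr2 0).le
    rw [nestedCI_succ']
    simp only [nestedCI_zero]
    cases i with
    | zero =>
      refine (cInt_congr (hr1 0).le (g := fun z => (z - 0)⁻¹ * (f z / q 0 z))
        (fun v hv => ?_)).trans ?_
      · simp only [cons_zero, zero_add, Finset.prod_range_zero, Finset.prod_range_one, Qd_zero,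
          pow_zero, one_mul, sub_zero]
        rw [div_eq_mul_inv, div_eq_mul_inv, mul_inv]
        ring
      · rw [cInt_cauchy (g := fun z => f z / q 0 z) (fun z hz => (((hf z (hsub hz)).div ((hq 0 z (hsub hz)).1)
            ((hq 0 z (hsub hz)).2)).differentiableAt).differentiableWithinAt)
            (mem_ball_self (hr1 0))]
        simp
    | succ m =>
      refine (cInt_congr (hr1 0).le (g := fun z => z ^ m * (f z / q 0 z))
        (fun v hv => ?_)).trans ?_
      · have hvabs : ‖v‖ = r 0 := abs_of_sphere hv
        have hv0 : v ≠ 0 := by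
          intro h; rw [h] at hvabs; simp at hvabs; exact absurd hvabs.symm (ne_of_gt (hr1 0))
        have hq0v : q 0 v ≠ 0 := (hq 0 v (hsub (sphere_subset_closedBall hv))).2
        simp only [cons_zero, zero_add, Finset.prod_range_zero, Finset.prod_range_one, Qd_zero,
          one_mul]
        field_simp
        ring
      · have hdiff : ∀ z ∈ closedBall (0:ℂ) (r 0),
            DifferentiableAt ℂ (fun z => z ^ m * (f z / q 0 z)) z := fun z hz =>
          (differentiableAt_pow m).mul (((hf z (hsub hz)).differentiableAt).div
            ((hq 0 z (hsub hz)).1.differentiableAt) ((hq 0 z (hsub hz)).2))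
        rw [cInt_zero_of_diff (hr1 0).le
          (fun z hz => (hdiff z hz).continuousAt.continuousWithinAt)
          (fun z hz => hdiff z (ball_subset_closedBall hz))]
        simp
  | succ j IH =>
    intro i f q r hji hf hq hr1 hr2 hrdec
    obtain ⟨i', rfl⟩ : ∃ i', i = i' + 1 := ⟨i - 1, by omega⟩
    have hji' : j ≤ i' := by omega
    have hrR : ∀ k, r k ≤ R₀ := fun k => (hr2 k).le
    have hmemc : ∀ (k : ℕ) (θ : ℝ), circleMap 0 (r k) θ ∈ closedBall (0:ℂ) R₀ :=
      fun k θ => mem_cb (by rw [norm_circleMap_zero, abs_of_pos (hr1 k)]) (hrR k)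
    have hq00 : q 0 0 ≠ 0 := (hq 0 0 (mem_closedBall_self hR₀.le)).2
    set cf : ℂ → ℂ := fun a => a ^ i' * f a / q 0 a with hcf
    set G : (ℕ → ℂ) → ℂ := fun w => ((∏ ℓ ∈ Finset.range j, (w ℓ - w (ℓ+1))) *
        ∏ ℓ ∈ Finset.range (j+1), (w ℓ * Qd q (ℓ+1) (w ℓ)))⁻¹ with hGdef
    set β : ℂ → ℂ := fun b => nestedCI j (fun k => r (k+1+1))
      (fun w' => G (cons b w')) with hβdef
    -- continuity of cf along the outer circle
    have hcf_cont : Continuous fun θ : ℝ => cf (circleMap 0 (r 0) θ) := by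
      refine Continuous.div ?_ ?_ (fun θ => (hq 0 _ (hmemc 0 θ)).2)
      · exact ((continuous_circleMap 0 (r 0)).pow i').mul
          (cont_comp_mem hf (continuous_circleMap 0 (r 0)) (hmemc 0))
      · exact cont_comp_mem (fun v hv => (hq 0 v hv).1) (continuous_circleMap 0 (r 0)) (hmemc 0)
    -- continuity of β along the second circle
    have hβ_cont : Continuous fun φ : ℝ => β (circleMap 0 (r 1) φ) := by
      apply nestedCI_param_continuous j (fun k => r (k+1+1))
        (F := fun (φ : ℝ) w' => G (cons (circleMap 0 (r 1) φ) w'))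
      set W : ℝ × (ℕ → ℝ) → ℕ → ℂ := fun p => cons (circleMap 0 (r 1) p.1)
        (fun k => if k < j then circleMap 0 (r (k+1+1)) (p.2 k) else 0) with hW
      show Continuous fun p : ℝ × (ℕ → ℝ) => G (W p)
      have hWc : ∀ k, k ≤ j → Continuous fun p => W p k := by
        intro k hk
        match k with
        | 0 => exact (continuous_circleMap 0 (r 1)).comp continuous_fst
        | k+1 =>
          have hkj : k < j := by omega
          simp only [hW, cons_succ, if_pos hkj]
          exact (continuous_circleMap 0 (r (k+1+1))).comp ((continuous_apply k).comp continuous_snd)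
      have hWabs : ∀ k, k ≤ j → ∀ p, ‖W p k‖ = r (k+1) := by
        intro k hk p
        match k with
        | 0 => simp only [hW, cons_zero]; rw [norm_circleMap_zero, abs_of_pos (hr1 1)]
        | k+1 =>
          have hkj : k < j := by omega
          simp only [hW, cons_succ, if_pos hkj]
          rw [norm_circleMap_zero, abs_of_pos (hr1 (k+1+1))]
      have hWmem : ∀ k, k ≤ j → ∀ p, W p k ∈ closedBall (0:ℂ) R₀ :=
        fun k hk p => mem_cb (hWabs k hk p) (hrR (k+1))
      have hW0 : ∀ k, k ≤ j → ∀ p, W p k ≠ 0 := by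
        intro k hk p h0
        have := hWabs k hk p
        rw [h0] at this; simp at this
        exact absurd this.symm (ne_of_gt (hr1 (k+1)))
      refine Continuous.inv₀ (Continuous.mul ?_ ?_) ?_
      · refine continuous_finset_prod _ fun ℓ hℓ => ?_
        have hℓj : ℓ < j := Finset.mem_range.mp hℓ
        exact (hWc ℓ hℓj.le).sub (hWc (ℓ+1) hℓj)
      · refine continuous_finset_prod _ fun ℓ hℓ => ?_
        have hℓj : ℓ ≤ j := by have := Finset.mem_range.mp hℓ; omega
        refine (hWc ℓ hℓj).mul ?_
        simp only [Qd_succ]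
        exact Continuous.div
          (cont_comp_mem (fun v hv => (hq (ℓ+1) v hv).1) (hWc ℓ hℓj) (hWmem ℓ hℓj))
          (cont_comp_mem (fun v hv => (hq ℓ v hv).1) (hWc ℓ hℓj) (hWmem ℓ hℓj))
          (fun p => (hq ℓ _ (hWmem ℓ hℓj p)).2)
      · intro p
        refine mul_ne_zero ?_ ?_
        · rw [Finset.prod_ne_zero_iff]
          intro ℓ hℓ
          have hℓj : ℓ < j := Finset.mem_range.mp hℓ
          refine sub_ne_zero_of_ne fun h => ?_
          have h1 := hWabs ℓ hℓj.le p
          have h2 := hWabs (ℓ+1) hℓj p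
          rw [h] at h1
          rw [h1] at h2
          exact absurd h2 (ne_of_gt (hrdec (ℓ+1)))
        · rw [Finset.prod_ne_zero_iff]
          intro ℓ hℓ
          have hℓj : ℓ ≤ j := by have := Finset.mem_range.mp hℓ; omega
          refine mul_ne_zero (hW0 ℓ hℓj p) ?_
          rw [Qd_succ]
          exact div_ne_zero (hq (ℓ+1) _ (hWmem ℓ hℓj p)).2 (hq ℓ _ (hWmem ℓ hℓj p)).2
    -- Step 1: peel the outer integral and identify the inner structure
    have key1 : nestedCI (j+1+1) r (fun v => v 0 ^ (i'+1) * f (v 0) /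
        ((∏ ℓ ∈ Finset.range (j+1), (v ℓ - v (ℓ+1))) *
          ∏ ℓ ∈ Finset.range (j+1+1), (v ℓ * Qd q ℓ (v ℓ)))) =
        cInt (r 0) (fun a => cInt (r 1) (fun b => cf a * ((a - b)⁻¹ * β b))) := by
      rw [nestedCI_succ']
      refine cInt_congr (hr1 0).le fun a ha => ?_
      have haabs : ‖a‖ = r 0 := abs_of_sphere ha
      have ha0 : a ≠ 0 := by
        intro h; rw [h] at haabs; simp at haabs; exact absurd haabs.symm (ne_of_gt (hr1 0))
      calc nestedCI (j+1) (fun k => r (k+1)) (fun w => (fun v => v 0 ^ (i'+1) * f (v 0) /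
              ((∏ ℓ ∈ Finset.range (j+1), (v ℓ - v (ℓ+1))) *
                ∏ ℓ ∈ Finset.range (j+1+1), (v ℓ * Qd q ℓ (v ℓ)))) (cons a w))
          = nestedCI (j+1) (fun k => r (k+1)) (fun w => cf a * ((a - w 0)⁻¹ * G w)) := by
            refine nestedCI_congr (j+1) _ (fun k => (hr1 (k+1)).le) fun w h1 h2 => ?_
            simp only [Finset.prod_range_succ' _ j, Finset.prod_range_succ' _ (j+1),
              cons_zero, cons_succ, Qd_zero, hGdef]
            exact alg1 a (w 0) (q 0 a) (f a) _ _ ha0 i'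
        _ = cf a * nestedCI (j+1) (fun k => r (k+1)) (fun w => (a - w 0)⁻¹ * G w) :=
            nestedCI_const_mul (j+1) _ _ _
        _ = cf a * cInt (r 1) (fun b => (a - b)⁻¹ * β b) := by
            rw [nestedCI_succ']
            refine congrArg _ (congrArg _ (funext fun b => ?_))
            simp only [cons_zero]
            exact nestedCI_const_mul j _ _ _
        _ = cInt (r 1) (fun b => cf a * ((a - b)⁻¹ * β b)) := (cInt_const_mul _ _ _).symm
    -- Step 2: swap the two outer integrals
    have key2 : cInt (r 0) (fun a => cInt (r 1) (fun b => cf a * ((a - b)⁻¹ * β b))) =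
        cInt (r 1) (fun b => cInt (r 0) (fun a => cf a * ((a - b)⁻¹ * β b))) := by
      refine cInt_swap ?_
      refine (hcf_cont.comp continuous_fst).mul (Continuous.mul ?_ (hβ_cont.comp continuous_snd))
      refine Continuous.inv₀ (((continuous_circleMap 0 (r 0)).comp continuous_fst).sub
        ((continuous_circleMap 0 (r 1)).comp continuous_snd)) fun p => ?_
      refine sub_ne_zero_of_ne fun h => ?_
      have h1 : ‖circleMap 0 (r 0) p.1‖ = r 0 := by
        rw [norm_circleMap_zero, abs_of_pos (hr1 0)]
      rw [h, norm_circleMap_zero, abs_of_pos (hr1 1)] at h1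
      exact absurd h1 (ne_of_lt (hrdec 0))
    -- Step 3: evaluate the outer integral by the Cauchy formula
    have key3 : cInt (r 1) (fun b => cInt (r 0) (fun a => cf a * ((a - b)⁻¹ * β b))) =
        cInt (r 1) (fun b => cf b * β b) := by
      refine cInt_congr (hr1 1).le fun b hb => ?_
      have hbabs : ‖b‖ = r 1 := abs_of_sphere hb
      have hbball : b ∈ ball (0:ℂ) (r 0) := by
        rw [mem_ball_zero_iff, hbabs]; exact hrdec 0
      have hcdiff : DifferentiableOn ℂ cf (closedBall 0 (r 0)) := by
        intro z hz
        have hzR : z ∈ closedBall (0:ℂ) R₀ := closedBall_subset_closedBall (hrR 0) hz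
        exact (((differentiableAt_pow i').mul ((hf z hzR).differentiableAt)).div
          ((hq 0 z hzR).1.differentiableAt) ((hq 0 z hzR).2)).differentiableWithinAt
      calc cInt (r 0) (fun a => cf a * ((a - b)⁻¹ * β b))
          = cInt (r 0) (fun a => β b * ((a - b)⁻¹ * cf a)) := by
            refine cInt_congr (hr1 0).le fun a _ => ?_; ring
        _ = β b * cInt (r 0) (fun a => (a - b)⁻¹ * cf a) := cInt_const_mul _ _ _
        _ = β b * cf b := by rw [cInt_cauchy hcdiff hbball]
        _ = cf b * β b := mul_comm _ _
    -- Step 4: fold back into a nested integral and apply IH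
    have key4 : cInt (r 1) (fun b => cf b * β b) =
        nestedCI (j+1) (fun k => r (k+1)) (fun w => cf (w 0) * G w) := by
      rw [nestedCI_succ' j (fun k => r (k+1)) (fun w => cf (w 0) * G w)]
      refine congrArg _ (funext fun b => ?_)
      simp only [cons_zero]
      exact (nestedCI_const_mul j _ _ _).symm
    have key5 : nestedCI (j+1) (fun k => r (k+1)) (fun w => cf (w 0) * G w) =
        nestedCI (j+1) (fun k => r (k+1)) (fun v => v 0 ^ i' * (fun z => f z / q 0 z) (v 0) /
          ((∏ ℓ ∈ Finset.range j, (v ℓ - v (ℓ+1))) *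
            ∏ ℓ ∈ Finset.range (j+1), (v ℓ * Qd (fun ℓ z => q (ℓ+1) z / q 0 z) ℓ (v ℓ)))) := by
      refine nestedCI_congr (j+1) _ (fun k => (hr1 (k+1)).le) fun w h1 h2 => ?_
      have hprod : ∏ ℓ ∈ Finset.range (j+1), (w ℓ * Qd (fun ℓ z => q (ℓ+1) z / q 0 z) ℓ (w ℓ)) =
          ∏ ℓ ∈ Finset.range (j+1), (w ℓ * Qd q (ℓ+1) (w ℓ)) := by
        refine Finset.prod_congr rfl fun ℓ hℓ => ?_
        have hℓj : ℓ < j + 1 := Finset.mem_range.mp hℓ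
        have hwmem : w ℓ ∈ closedBall (0:ℂ) R₀ := mem_cb (h1 ℓ hℓj) (hrR (ℓ+1))
        congr 1
        match ℓ with
        | 0 => rw [Qd_zero, Qd_succ]
        | ℓ+1 =>
          rw [Qd_succ, Qd_succ]
          rw [div_div_div_cancel_right₀]
          exact (hq 0 _ hwmem).2
      rw [hprod, hGdef, hcf]
      simp only [div_eq_mul_inv]
      ring
    rw [key1, key2, key3, key4, key5,
      IH i' (fun z => f z / q 0 z) (fun ℓ z => q (ℓ+1) z / q 0 z) (fun k => r (k+1)) hji'
        (fun v hv => ((hf v hv).div ((hq 0 v hv).1) ((hq 0 v hv).2)))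
        (fun ℓ v hv => ⟨((hq (ℓ+1) v hv).1.div ((hq 0 v hv).1) ((hq 0 v hv).2)),
          div_ne_zero ((hq (ℓ+1) v hv).2) ((hq 0 v hv).2)⟩)
        (fun k => hr1 (k+1)) (fun k => hr2 (k+1)) (fun k => hrdec (k+1))]
    by_cases h : i' = j
    · subst h
      rw [if_pos rfl, if_pos rfl]
      rw [div_div_div_cancel_right₀]
      exact hq00
    · rw [if_neg h, if_neg (by omega)]

end S8

/-- for `1 ≤ j ≤ i ≤ n` (here `0`-based: `j ≤ i < n`, with `j+1` integration
variables), the nested integral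
`∮⋯∮ v₁^{i-1} pᵢ(v₁)/([∏_{ℓ=1}^{j-1}(v_ℓ-v_{ℓ+1})]·[∏_{ℓ=1}^j v_ℓ P_ℓ(v_ℓ)]) (dv/2πi)ʲ`
over nested small circles `|v₁| > ⋯ > |v_j|` equals `δᵢⱼ`. -/
theorem stmt8 (n : ℕ) (p P : ℕ → ℂ → ℂ) (R₀ : ℝ) (hR₀ : 0 < R₀)
    (hp : ∀ i < n, ∀ v ∈ Metric.closedBall (0 : ℂ) R₀, AnalyticAt ℂ (p i) v)
    (hp0 : ∀ i < n, p i 0 = 1)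
    (hpne : ∀ i < n, ∀ v ∈ Metric.closedBall (0 : ℂ) R₀, p i v ≠ 0)
    (hP0 : ∀ v, P 0 v = p 0 v)
    (hPs : ∀ ℓ, 0 < ℓ → ∀ v, P ℓ v = p ℓ v / p (ℓ - 1) v)
    (ρ : ℕ → ℝ) (hρpos : ∀ k, 0 < ρ k) (hρR : ∀ k, ρ k < R₀) (hρdec : ∀ k, ρ (k+1) < ρ k)
    (i j : ℕ) (hji : j ≤ i) (hin : i < n) :
    nestedCI (j + 1) ρ (fun v =>
      v 0 ^ i * p i (v 0) / ((∏ ℓ ∈ Finset.range j, (v ℓ - v (ℓ+1))) *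
        ∏ ℓ ∈ Finset.range (j + 1), (v ℓ * P ℓ (v ℓ)))) = if i = j then 1 else 0 := by
  have hmin : ∀ ℓ : ℕ, min ℓ i < n := fun ℓ => lt_of_le_of_lt (min_le_right ℓ i) hin
  have key := S8.aux hR₀ j i (p i) (fun ℓ => p (min ℓ i)) ρ hji
    (fun v hv => hp i hin v hv)
    (fun ℓ v hv => ⟨hp (min ℓ i) (hmin ℓ) v hv, hpne (min ℓ i) (hmin ℓ) v hv⟩)
    hρpos hρR hρdec
  have heq : (fun v : ℕ → ℂ => v 0 ^ i * p i (v 0) /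
        ((∏ ℓ ∈ Finset.range j, (v ℓ - v (ℓ+1))) *
          ∏ ℓ ∈ Finset.range (j + 1), (v ℓ * P ℓ (v ℓ)))) =
      (fun v : ℕ → ℂ => v 0 ^ i * p i (v 0) /
        ((∏ ℓ ∈ Finset.range j, (v ℓ - v (ℓ+1))) *
          ∏ ℓ ∈ Finset.range (j + 1), (v ℓ * S8.Qd (fun ℓ => p (min ℓ i)) ℓ (v ℓ)))) := by
    funext v
    congr 2
    refine Finset.prod_congr rfl fun ℓ hℓ => ?_
    have hℓj : ℓ ≤ j := by have := Finset.mem_range.mp hℓ; omega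
    congr 1
    match ℓ with
    | 0 =>
      rw [hP0, S8.Qd_zero]
      simp
    | ℓ+1 =>
      rw [hPs (ℓ+1) (Nat.succ_pos ℓ) (v (ℓ+1)), S8.Qd_succ]
      have h1 : min (ℓ+1) i = ℓ+1 := min_eq_left (by omega)
      have h2 : min ℓ i = ℓ := min_eq_left (by omega)
      rw [h1, h2]
      simp
  rw [heq, key]
  by_cases h : i = j
  · subst h
    simp [hp0 i hin]
  · rw [if_neg h, if_neg h]
end

section
/- Let $p_1,\ldots,p_n$ be analytic at $0$ with $p_i(0)=1$, set $P_1=p_1$ and $P_\ell = p_\ell/p_{\ell-1}$. For indices $1\le i < j \le n$, the nested multiple contour integral $\oint\frac{dv_1}{2\pi i}\cdots\oint\frac{dv_j}{2\pi i}\; \frac{v_1^{i-1} p_i(v_1)}{\left[\prod_{\ell=1}^{j-1}(v_\ell - v_{\ell+1})\right]\cdot\left[\prod_{\ell=1}^{j} v_\ell P_\ell(v_\ell)\right]}$ over nested small circles $|v_1| > \cdots > |v_j|$ around the origin equals $0$. -/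
open Finset

namespace Stmt9Aux
open Metric Set MeasureTheory intervalIntegral
def vcons (v : ℂ) (w : ℕ → ℂ) : ℕ → ℂ := fun k => match k with
  | 0 => v
  | k+1 => w k
@[simp] lemma vcons_zero (v : ℂ) (w : ℕ → ℂ) : vcons v w 0 = v := rfl
@[simp] lemma vcons_succ (v : ℂ) (w : ℕ → ℂ) (k : ℕ) : vcons v w (k+1) = w k := rfl
@[fun_prop] lemma continuous_vcons : Continuous fun p : ℂ × (ℕ → ℂ) => vcons p.1 p.2 := by
  refine continuous_pi fun k => ?_
  cases k with
  | zero => exact continuous_fst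
  | succ k => exact (continuous_apply k).comp continuous_snd
lemma nestedCI_succ (m : ℕ) (r : ℕ → ℝ) (F : (ℕ → ℂ) → ℂ) :
    nestedCI (m+1) r F
      = cInt (r 0) fun v => nestedCI m (fun k => r (k+1)) (fun w => F (vcons v w)) := rfl
lemma cInt_congr {r : ℝ} (hr : 0 ≤ r) {f g : ℂ → ℂ} (h : Set.EqOn f g (sphere (0:ℂ) r)) :
    cInt r f = cInt r g := by
  unfold cInt; rw [circleIntegral.integral_congr hr h]
lemma cInt_const_mul (r : ℝ) (c : ℂ) (f : ℂ → ℂ) :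
    cInt r (fun v => c * f v) = c * cInt r f := by
  unfold cInt; rw [circleIntegral.integral_const_mul]; ring
lemma cInt_zero (r : ℝ) : cInt r (fun _ => (0:ℂ)) = 0 := by simp [cInt, circleIntegral]

/-- The torus: first `m` coordinates on spheres, the rest `0`. -/
def T (m : ℕ) (r : ℕ → ℝ) : Set (ℕ → ℂ) :=
  {w | (∀ k, k < m → w k ∈ sphere (0:ℂ) (r k)) ∧ ∀ k, m ≤ k → w k = 0}

lemma zero_mem_T (r : ℕ → ℝ) : (fun _ => (0:ℂ)) ∈ T 0 r :=
  ⟨fun k hk => absurd hk (Nat.not_lt_zero k), fun _ _ => rfl⟩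

lemma vcons_mem_T {m : ℕ} {r : ℕ → ℝ} {v : ℂ} {w : ℕ → ℂ}
    (hv : v ∈ sphere (0:ℂ) (r 0)) (hw : w ∈ T m (fun k => r (k+1))) :
    vcons v w ∈ T (m+1) r := by
  constructor
  · intro k hk
    cases k with
    | zero => exact hv
    | succ k => exact hw.1 k (by omega)
  · intro k hk
    cases k with
    | zero => omega
    | succ k => exact hw.2 k (by omega)

lemma nestedCI_congr : ∀ (m : ℕ) (r : ℕ → ℝ), (∀ k, 0 ≤ r k) → ∀ (F G : (ℕ → ℂ) → ℂ),
    (∀ w ∈ T m r, F w = G w) → nestedCI m r F = nestedCI m r G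
  | 0, r, _, F, G, h => h _ (zero_mem_T r)
  | m+1, r, hr, F, G, h => by
    rw [nestedCI_succ, nestedCI_succ]
    refine cInt_congr (hr 0) fun v hv => ?_
    exact nestedCI_congr m _ (fun k => hr (k+1)) _ _ fun w hw => h _ (vcons_mem_T hv hw)

lemma nestedCI_const_mul : ∀ (m : ℕ) (r : ℕ → ℝ) (c : ℂ) (F : (ℕ → ℂ) → ℂ),
    nestedCI m r (fun w => c * F w) = c * nestedCI m r F
  | 0, _, _, _ => rfl
  | m+1, r, c, F => by
    rw [nestedCI_succ, nestedCI_succ]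
    have h : ∀ v : ℂ, nestedCI m (fun k => r (k+1)) (fun w => c * F (vcons v w))
        = c * nestedCI m (fun k => r (k+1)) (fun w => F (vcons v w)) := fun v =>
      nestedCI_const_mul m _ c _
    simp only [h]
    exact cInt_const_mul _ c _

lemma nestedCI_zero : ∀ (m : ℕ) (r : ℕ → ℝ), nestedCI m r (fun _ => (0:ℂ)) = 0
  | 0, _ => rfl
  | m+1, r => by
    rw [nestedCI_succ]
    exact (congrArg (cInt (r 0)) (funext fun v => nestedCI_zero m (fun k => r (k+1)))).trans
      (cInt_zero _)


lemma nestedCI_cont {X : Type} [TopologicalSpace X] :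
    ∀ (m : ℕ) (r : ℕ → ℝ), (∀ k, 0 ≤ r k) → ∀ (H : X → (ℕ → ℂ) → ℂ),
    ContinuousOn (fun q : X × (ℕ → ℂ) => H q.1 q.2) (Set.univ ×ˢ T m r) →
    Continuous fun x => nestedCI m r (H x)
  | 0, r, _, H, hH => by
    have : (fun x => nestedCI 0 r (H x)) = fun x => H x (fun _ => 0) := rfl
    rw [this]
    exact hH.comp_continuous (continuous_id.prodMk continuous_const)
      fun x => Set.mk_mem_prod (mem_univ x) (zero_mem_T r)
  | m+1, r, hr, H, hH => by
    have hinner : Continuous fun q : X × ℝ =>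
        nestedCI m (fun k => r (k+1)) (fun w => H q.1 (vcons (circleMap 0 (r 0) q.2) w)) := by
      refine nestedCI_cont m (fun k => r (k+1)) (fun k => hr (k+1))
        (fun (q : X × ℝ) (w : ℕ → ℂ) => H q.1 (vcons (circleMap 0 (r 0) q.2) w)) ?_
      have hmap : Continuous fun q : (X × ℝ) × (ℕ → ℂ) =>
          ((q.1.1, vcons (circleMap 0 (r 0) q.1.2) q.2) : X × (ℕ → ℂ)) := by fun_prop
      refine hH.comp hmap.continuousOn ?_
      rintro ⟨⟨x, θ⟩, w⟩ ⟨-, hw⟩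
      exact Set.mk_mem_prod (mem_univ _)
        (vcons_mem_T (circleMap_mem_sphere 0 (hr 0) θ) hw)
    have heq : (fun x => nestedCI (m+1) r (H x)) = fun x =>
        (2 * Real.pi * Complex.I)⁻¹ * ∫ θ in (0:ℝ)..(2 * Real.pi),
          (circleMap 0 (r 0) θ * Complex.I) *
            nestedCI m (fun k => r (k+1)) (fun w => H x (vcons (circleMap 0 (r 0) θ) w)) := by
      funext x
      rw [nestedCI_succ]
      simp only [cInt, circleIntegral, deriv_circleMap, smul_eq_mul]
    rw [heq]
    refine continuous_const.mul ?_
    refine intervalIntegral.continuous_parametric_intervalIntegral_of_continuous' ?_ 0 (2 * Real.pi)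
    exact (((continuous_circleMap 0 (r 0)).comp continuous_snd).mul continuous_const).mul hinner

lemma cInt_swap {r0 r1 : ℝ} (h0 : 0 ≤ r0) (h1 : 0 ≤ r1) {Φ : ℂ → ℂ → ℂ}
    (hΦ : ContinuousOn (fun q : ℂ × ℂ => Φ q.1 q.2) (sphere (0:ℂ) r0 ×ˢ sphere (0:ℂ) r1)) :
    cInt r0 (fun v => cInt r1 (fun w => Φ v w)) = cInt r1 (fun w => cInt r0 (fun v => Φ v w)) := by
  have hc : Continuous fun q : ℝ × ℝ => Φ (circleMap 0 r0 q.1) (circleMap 0 r1 q.2) := by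
    have hf : Continuous fun q : ℝ × ℝ => ((circleMap 0 r0 q.1, circleMap 0 r1 q.2) : ℂ × ℂ) :=
      ((continuous_circleMap 0 r0).comp continuous_fst).prodMk
        ((continuous_circleMap 0 r1).comp continuous_snd)
    exact hΦ.comp_continuous hf fun q =>
      Set.mk_mem_prod (circleMap_mem_sphere 0 h0 q.1) (circleMap_mem_sphere 0 h1 q.2)
  set c : ℂ := (2 * ↑Real.pi * Complex.I)⁻¹ with hcdef
  set d0 : ℝ → ℂ := fun θ => circleMap 0 r0 θ * Complex.I with hd0
  set d1 : ℝ → ℂ := fun φ => circleMap 0 r1 φ * Complex.I with hd1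
  set ψ : ℝ → ℝ → ℂ := fun θ φ => d0 θ * (d1 φ * Φ (circleMap 0 r0 θ) (circleMap 0 r1 φ))
    with hψdef
  have hψ : Continuous fun q : ℝ × ℝ => ψ q.1 q.2 := by
    exact (((continuous_circleMap 0 r0).comp continuous_fst).mul continuous_const).mul
      ((((continuous_circleMap 0 r1).comp continuous_snd).mul continuous_const).mul hc)
  have hle : (0:ℝ) ≤ 2 * Real.pi := by positivity
  have hint : MeasureTheory.Integrable (Function.uncurry ψ)
      ((MeasureTheory.volume.restrict (Set.Ioc (0:ℝ) (2*Real.pi))).prod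
        (MeasureTheory.volume.restrict (Set.Ioc (0:ℝ) (2*Real.pi)))) := by
    rw [MeasureTheory.Measure.prod_restrict]
    have h2 : MeasureTheory.IntegrableOn (Function.uncurry ψ)
        (Set.Icc (0:ℝ) (2*Real.pi) ×ˢ Set.Icc (0:ℝ) (2*Real.pi)) MeasureTheory.volume :=
      hψ.continuousOn.integrableOn_compact (isCompact_Icc.prod isCompact_Icc)
    exact h2.mono_set (Set.prod_mono Set.Ioc_subset_Icc_self Set.Ioc_subset_Icc_self)
  have key : (∫ θ in (0:ℝ)..(2*Real.pi), ∫ φ in (0:ℝ)..(2*Real.pi), ψ θ φ)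
      = ∫ φ in (0:ℝ)..(2*Real.pi), ∫ θ in (0:ℝ)..(2*Real.pi), ψ θ φ := by
    simp only [intervalIntegral.integral_of_le hle]
    exact MeasureTheory.integral_integral_swap hint
  have e1 : ∀ θ : ℝ, d0 θ * (c * ∫ φ in (0:ℝ)..(2*Real.pi),
      d1 φ * Φ (circleMap 0 r0 θ) (circleMap 0 r1 φ))
      = c * ∫ φ in (0:ℝ)..(2*Real.pi), ψ θ φ := by
    intro θ
    simp only [hψdef]
    rw [intervalIntegral.integral_const_mul]
    ring
  have e2 : ∀ φ : ℝ, d1 φ * (c * ∫ θ in (0:ℝ)..(2*Real.pi),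
      d0 θ * Φ (circleMap 0 r0 θ) (circleMap 0 r1 φ))
      = c * ∫ θ in (0:ℝ)..(2*Real.pi), ψ θ φ := by
    intro φ
    have h3 : ∀ θ : ℝ, ψ θ φ = d1 φ * (d0 θ * Φ (circleMap 0 r0 θ) (circleMap 0 r1 φ)) := by
      intro θ; simp only [hψdef]; ring
    simp only [h3]
    rw [intervalIntegral.integral_const_mul]
    ring
  have L : cInt r0 (fun v => cInt r1 (fun w => Φ v w))
      = c * (c * ∫ θ in (0:ℝ)..(2*Real.pi), ∫ φ in (0:ℝ)..(2*Real.pi), ψ θ φ) := by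
    simp only [cInt, circleIntegral, deriv_circleMap, smul_eq_mul, ← hcdef, ← hd0, ← hd1]
    simp only [hd0, hd1] at e1
    simp only [e1]
    rw [intervalIntegral.integral_const_mul]
  have R : cInt r1 (fun w => cInt r0 (fun v => Φ v w))
      = c * (c * ∫ φ in (0:ℝ)..(2*Real.pi), ∫ θ in (0:ℝ)..(2*Real.pi), ψ θ φ) := by
    simp only [cInt, circleIntegral, deriv_circleMap, smul_eq_mul, ← hcdef, ← hd0, ← hd1]
    simp only [hd0, hd1] at e2
    simp only [e2]
    rw [intervalIntegral.integral_const_mul]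
  rw [L, R, key]

lemma cInt_cauchy {r : ℝ} {f : ℂ → ℂ} (hf : DiffContOnCl ℂ f (ball (0:ℂ) r)) {w : ℂ}
    (hw : w ∈ ball (0:ℂ) r) : cInt r (fun v => (v - w)⁻¹ * f v) = f w := by
  have h := hf.circleIntegral_sub_inv_smul hw
  simp only [smul_eq_mul] at h
  rw [cInt, h]
  have h2 : (2 * (Real.pi:ℂ) * Complex.I) ≠ 0 := by
    simp [Real.pi_ne_zero, Complex.I_ne_zero]
  field_simp

lemma cInt_basezero {r : ℝ} (hr : 0 < r) {w : ℂ} (hw : w ∈ ball (0:ℂ) r) (hw0 : w ≠ 0) :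
    cInt r (fun v => v⁻¹ * (v - w)⁻¹) = 0 := by
  have habs : ‖w‖ < r := by simpa [Complex.dist_eq] using hw
  have h1 : cInt r (fun v => v⁻¹ * (v - w)⁻¹)
      = cInt r (fun v => w⁻¹ * ((v - w)⁻¹ - (v - 0)⁻¹)) := by
    refine cInt_congr hr.le fun v hv => ?_
    have hvr : ‖v‖ = r := by simpa [Complex.dist_eq] using hv
    have hv0 : v ≠ 0 := by
      intro h
      rw [h] at hvr; simp at hvr; linarith
    have hvw : v - w ≠ 0 := by
      intro h
      have : v = w := by linear_combination h
      rw [this] at hvr; linarith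
    have hvw' : v ≠ w := fun h => hvw (by rw [h]; ring)
    field_simp
    ring
  rw [h1, cInt_const_mul]
  have hiw : CircleIntegrable (fun z : ℂ => (z - w)⁻¹) 0 r := by
    rw [circleIntegrable_sub_inv_iff]
    right
    intro hmem
    have : ‖w‖ = |r| := by simpa [Complex.dist_eq] using hmem
    rw [abs_of_pos hr] at this; linarith
  have hi0 : CircleIntegrable (fun z : ℂ => (z - 0)⁻¹) 0 r := by
    rw [circleIntegrable_sub_inv_iff]
    right
    intro hmem
    have : (0:ℝ) = |r| := by simpa [Complex.dist_eq] using hmem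
    rw [abs_of_pos hr] at this; linarith
  have h2 : (∮ z in C(0, r), ((z - w)⁻¹ - (z - 0)⁻¹)) = 0 := by
    rw [circleIntegral.integral_sub hiw hi0,
      circleIntegral.integral_sub_inv_of_mem_ball hw,
      circleIntegral.integral_sub_inv_of_mem_ball (mem_ball_self hr), sub_self]
  rw [cInt, h2, mul_zero, mul_zero]
lemma sphere_abs {r : ℝ} {v : ℂ} (hv : v ∈ sphere (0:ℂ) r) : ‖v‖ = r := by
  simpa [Complex.dist_eq] using hv

lemma eval_step (m : ℕ) (r : ℕ → ℝ) (hrpos : ∀ k, 0 < r k) (hrdec : ∀ k, r (k+1) < r k)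
    (f : ℂ → ℂ) (hf : DiffContOnCl ℂ f (ball (0:ℂ) (r 0)))
    (G : (ℕ → ℂ) → ℂ)
    (hK : ContinuousOn
      (fun w0 : ℂ => nestedCI m (fun k => r (k+2)) (fun z => G (vcons w0 z)))
      (sphere (0:ℂ) (r 1))) :
    nestedCI (m+2) r (fun u => f (u 0) * ((u 0 - u 1)⁻¹ * G (fun k => u (k+1))))
      = nestedCI (m+1) (fun k => r (k+1)) (fun w => f (w 0) * G w) := by
  set K : ℂ → ℂ := fun w0 => nestedCI m (fun k => r (k+2)) (fun z => G (vcons w0 z)) with hKdef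
  have hL : nestedCI (m+2) r (fun u => f (u 0) * ((u 0 - u 1)⁻¹ * G (fun k => u (k+1))))
      = cInt (r 0) (fun v => cInt (r 1) (fun w0 => f v * (v - w0)⁻¹ * K w0)) := by
    rw [nestedCI_succ]
    refine congrArg _ (funext fun v => ?_)
    rw [nestedCI_succ]
    refine congrArg _ (funext fun w0 => ?_)
    have e : (fun z => f v * ((v - w0)⁻¹ * G (vcons w0 z)))
        = fun z => (f v * (v - w0)⁻¹) * G (vcons w0 z) := by
      funext z; ring
    calc nestedCI m (fun k => r (k+2)) (fun z => f v * ((v - w0)⁻¹ * G (vcons w0 z)))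
        = nestedCI m (fun k => r (k+2)) (fun z => (f v * (v - w0)⁻¹) * G (vcons w0 z)) := by
          rw [e]
      _ = f v * (v - w0)⁻¹ * K w0 := nestedCI_const_mul m _ _ _
  have hR : nestedCI (m+1) (fun k => r (k+1)) (fun w => f (w 0) * G w)
      = cInt (r 1) (fun w0 => f w0 * K w0) := by
    rw [nestedCI_succ]
    exact congrArg _ (funext fun w0 =>
      (nestedCI_const_mul m (fun k => r (k+2)) (f w0) (fun z => G (vcons w0 z)) : _))
  rw [hL, hR]
  have hfc : ContinuousOn f (sphere (0:ℂ) (r 0)) := by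
    refine hf.continuousOn.mono ?_
    rw [closure_ball (0:ℂ) (ne_of_gt (hrpos 0))]
    exact sphere_subset_closedBall
  have hΦ : ContinuousOn (fun q : ℂ × ℂ => f q.1 * (q.1 - q.2)⁻¹ * K q.2)
      (sphere (0:ℂ) (r 0) ×ˢ sphere (0:ℂ) (r 1)) := by
    refine ContinuousOn.mul (ContinuousOn.mul ?_ ?_) ?_
    · exact hfc.comp continuousOn_fst fun q hq => hq.1
    · refine ContinuousOn.inv₀ (continuous_fst.sub continuous_snd).continuousOn ?_
      rintro ⟨v, w0⟩ ⟨hv, hw0⟩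
      intro h
      have hveq : v = w0 := by linear_combination h
      have := sphere_abs hv
      have := sphere_abs hw0
      rw [hveq] at *
      have := hrdec 0
      simp_all
    · exact hK.comp continuousOn_snd fun q hq => hq.2
  rw [cInt_swap (hrpos 0).le (hrpos 1).le hΦ]
  refine cInt_congr (hrpos 1).le fun w0 hw0 => ?_
  have hball : w0 ∈ ball (0:ℂ) (r 0) := by
    have := sphere_abs hw0
    simp only [mem_ball, Complex.dist_eq, sub_zero]
    rw [this]
    exact hrdec 0
  have e2 : Set.EqOn (fun v => f v * (v - w0)⁻¹ * K w0)
      (fun v => K w0 * ((v - w0)⁻¹ * f v)) (sphere (0:ℂ) (r 0)) := fun v _ => by ring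
  rw [cInt_congr (hrpos 0).le e2, cInt_const_mul, cInt_cauchy hf hball]
  ring

lemma eval_base (m : ℕ) (r : ℕ → ℝ) (hrpos : ∀ k, 0 < r k) (hrdec : ∀ k, r (k+1) < r k)
    (G : (ℕ → ℂ) → ℂ)
    (hK : ContinuousOn
      (fun w0 : ℂ => nestedCI m (fun k => r (k+2)) (fun z => G (vcons w0 z)))
      (sphere (0:ℂ) (r 1))) :
    nestedCI (m+2) r (fun u => (u 0)⁻¹ * ((u 0 - u 1)⁻¹ * G (fun k => u (k+1)))) = 0 := by
  set K : ℂ → ℂ := fun w0 => nestedCI m (fun k => r (k+2)) (fun z => G (vcons w0 z)) with hKdef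
  have hL : nestedCI (m+2) r (fun u => (u 0)⁻¹ * ((u 0 - u 1)⁻¹ * G (fun k => u (k+1))))
      = cInt (r 0) (fun v => cInt (r 1) (fun w0 => v⁻¹ * (v - w0)⁻¹ * K w0)) := by
    rw [nestedCI_succ]
    refine congrArg _ (funext fun v => ?_)
    rw [nestedCI_succ]
    refine congrArg _ (funext fun w0 => ?_)
    have e : (fun z => v⁻¹ * ((v - w0)⁻¹ * G (vcons w0 z)))
        = fun z => (v⁻¹ * (v - w0)⁻¹) * G (vcons w0 z) := by
      funext z; ring
    calc nestedCI m (fun k => r (k+2)) (fun z => v⁻¹ * ((v - w0)⁻¹ * G (vcons w0 z)))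
        = nestedCI m (fun k => r (k+2)) (fun z => (v⁻¹ * (v - w0)⁻¹) * G (vcons w0 z)) := by
          rw [e]
      _ = v⁻¹ * (v - w0)⁻¹ * K w0 := nestedCI_const_mul m _ _ _
  rw [hL]
  have hΦ : ContinuousOn (fun q : ℂ × ℂ => (q.1)⁻¹ * (q.1 - q.2)⁻¹ * K q.2)
      (sphere (0:ℂ) (r 0) ×ˢ sphere (0:ℂ) (r 1)) := by
    refine ContinuousOn.mul (ContinuousOn.mul ?_ ?_) ?_
    · refine ContinuousOn.inv₀ continuousOn_fst ?_
      rintro ⟨v, w0⟩ ⟨hv, -⟩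
      intro h
      have := sphere_abs hv
      rw [h] at this
      simp at this
      have := hrpos 0
      linarith
    · refine ContinuousOn.inv₀ (continuous_fst.sub continuous_snd).continuousOn ?_
      rintro ⟨v, w0⟩ ⟨hv, hw0⟩
      intro h
      have hveq : v = w0 := by linear_combination h
      have h1 := sphere_abs hv
      have h2 := sphere_abs hw0
      rw [hveq] at h1
      have := hrdec 0
      linarith [h1, h2]
    · exact hK.comp continuousOn_snd fun q hq => hq.2
  rw [cInt_swap (hrpos 0).le (hrpos 1).le hΦ]
  have : Set.EqOn (fun w0 => cInt (r 0) fun v => v⁻¹ * (v - w0)⁻¹ * K w0)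
      (fun _ => (0:ℂ)) (sphere (0:ℂ) (r 1)) := by
    intro w0 hw0
    have habs := sphere_abs hw0
    have hball : w0 ∈ ball (0:ℂ) (r 0) := by
      simp only [mem_ball, Complex.dist_eq, sub_zero]
      rw [habs]; exact hrdec 0
    have hw00 : w0 ≠ 0 := by
      intro h; rw [h] at habs; simp at habs
      have := hrpos 1; linarith
    have e2 : Set.EqOn (fun v => v⁻¹ * (v - w0)⁻¹ * K w0)
        (fun v => K w0 * (v⁻¹ * (v - w0)⁻¹)) (sphere (0:ℂ) (r 0)) := fun v _ => by ring
    show cInt (r 0) (fun v => v⁻¹ * (v - w0)⁻¹ * K w0) = 0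
    rw [cInt_congr (hrpos 0).le e2, cInt_const_mul, cInt_basezero (hrpos 0) hball hw00,
      mul_zero]
  rw [cInt_congr (hrpos 1).le this, cInt_zero]

noncomputable def Gfun (P : ℕ → ℂ → ℂ) (a m' : ℕ) : (ℕ → ℂ) → ℂ := fun w =>
  ((∏ ℓ ∈ Finset.range m', (w ℓ - w (ℓ+1))) *
   ∏ ℓ ∈ Finset.range (m'+1), (w ℓ * P (a+1+ℓ) (w ℓ)))⁻¹

section Main

variable {n : ℕ} {p P : ℕ → ℂ → ℂ} {R₀ : ℝ}

lemma pcont (hp : ∀ i < n, ∀ v ∈ closedBall (0:ℂ) R₀, AnalyticAt ℂ (p i) v)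
    {c : ℕ} (hc : c < n) : ContinuousOn (p c) (closedBall (0:ℂ) R₀) :=
  fun v hv => ((hp c hc v hv).continuousAt).continuousWithinAt

lemma Pcont (hp : ∀ i < n, ∀ v ∈ closedBall (0:ℂ) R₀, AnalyticAt ℂ (p i) v)
    (hpne : ∀ i < n, ∀ v ∈ closedBall (0:ℂ) R₀, p i v ≠ 0)
    (hPs : ∀ ℓ, 0 < ℓ → ∀ v, P ℓ v = p ℓ v / p (ℓ - 1) v)
    {c : ℕ} (hc0 : 0 < c) (hc : c < n) : ContinuousOn (P c) (closedBall (0:ℂ) R₀) := by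
  have he : ∀ v : ℂ, P c v = p c v / p (c-1) v := hPs c hc0
  have h2 : ContinuousOn (fun v => p c v / p (c-1) v) (closedBall (0:ℂ) R₀) :=
    (pcont hp hc).div (pcont hp (by omega)) fun v hv => hpne (c-1) (by omega) v hv
  exact h2.congr fun v _ => he v

lemma Pne (hpne : ∀ i < n, ∀ v ∈ closedBall (0:ℂ) R₀, p i v ≠ 0)
    (hPs : ∀ ℓ, 0 < ℓ → ∀ v, P ℓ v = p ℓ v / p (ℓ - 1) v)
    {c : ℕ} (hc0 : 0 < c) (hc : c < n) {v : ℂ} (hv : v ∈ closedBall (0:ℂ) R₀) :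
    P c v ≠ 0 := by
  rw [hPs c hc0 v]
  exact div_ne_zero (hpne c hc v hv) (hpne (c-1) (by omega) v hv)

lemma T_mem_closedBall (hR₀ : 0 < R₀) {m : ℕ} {r : ℕ → ℝ} (hrR : ∀ k, r k < R₀)
    {u : ℕ → ℂ} (hu : u ∈ T m r) {k : ℕ} (hk : k < m) : u k ∈ closedBall (0:ℂ) R₀ := by
  have := sphere_abs (hu.1 k hk)
  simp only [mem_closedBall, Complex.dist_eq, sub_zero]
  rw [this]
  exact (hrR k).le

lemma T_ne_zero {m : ℕ} {r : ℕ → ℝ} (hrpos : ∀ k, 0 < r k)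
    {u : ℕ → ℂ} (hu : u ∈ T m r) {k : ℕ} (hk : k < m) : u k ≠ 0 := by
  intro h
  have h1 := sphere_abs (hu.1 k hk)
  rw [h] at h1
  simp at h1
  linarith [hrpos k]

lemma T_sub_ne {m : ℕ} {r : ℕ → ℝ} (hrdec : ∀ k, r (k+1) < r k)
    {u : ℕ → ℂ} (hu : u ∈ T m r) {k : ℕ} (hk : k + 1 < m) : u k - u (k+1) ≠ 0 := by
  intro h
  have h1 := sphere_abs (hu.1 k (by omega))
  have h2 := sphere_abs (hu.1 (k+1) hk)
  have : u k = u (k+1) := by linear_combination h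
  rw [this, h2] at h1
  linarith [hrdec k]

lemma Gcont (hR₀ : 0 < R₀)
    (hp : ∀ i < n, ∀ v ∈ closedBall (0:ℂ) R₀, AnalyticAt ℂ (p i) v)
    (hpne : ∀ i < n, ∀ v ∈ closedBall (0:ℂ) R₀, p i v ≠ 0)
    (hPs : ∀ ℓ, 0 < ℓ → ∀ v, P ℓ v = p ℓ v / p (ℓ - 1) v)
    (a m' : ℕ) (r : ℕ → ℝ) (hrpos : ∀ k, 0 < r k) (hrR : ∀ k, r k < R₀)
    (hrdec : ∀ k, r (k+1) < r k) (han : a + m' + 1 < n) :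
    ContinuousOn (Gfun P a m') (T (m'+1) (fun k => r (k+1))) := by
  refine ContinuousOn.inv₀ (ContinuousOn.mul ?_ ?_) ?_
  · exact (continuous_finset_prod _ fun ℓ _ =>
      (continuous_apply ℓ).sub (continuous_apply (ℓ+1))).continuousOn
  · refine continuousOn_finset_prod _ fun ℓ hℓ => ?_
    have hℓm : ℓ < m'+1 := Finset.mem_range.mp hℓ
    have hc1 : a+1+ℓ < n := by omega
    refine ContinuousOn.mul (continuous_apply ℓ).continuousOn ?_
    have hmaps : Set.MapsTo (fun w : ℕ → ℂ => w ℓ) (T (m'+1) (fun k => r (k+1)))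
        (closedBall (0:ℂ) R₀) := fun w hw => T_mem_closedBall hR₀ (fun k => hrR (k+1)) hw hℓm
    exact (Pcont hp hpne hPs (by omega) hc1).comp (continuous_apply ℓ).continuousOn hmaps
  · intro w hw
    refine mul_ne_zero (Finset.prod_ne_zero_iff.mpr fun ℓ hℓ => ?_)
      (Finset.prod_ne_zero_iff.mpr fun ℓ hℓ => ?_)
    · exact T_sub_ne (fun k => hrdec (k+1)) hw (by simpa using Finset.mem_range.mp hℓ)
    · have hℓm : ℓ < m'+1 := Finset.mem_range.mp hℓ
      refine mul_ne_zero (T_ne_zero (fun k => hrpos (k+1)) hw hℓm) ?_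
      exact Pne hpne hPs (by omega) (by omega)
        (T_mem_closedBall hR₀ (fun k => hrR (k+1)) hw hℓm)

lemma Kcont (hR₀ : 0 < R₀)
    (hp : ∀ i < n, ∀ v ∈ closedBall (0:ℂ) R₀, AnalyticAt ℂ (p i) v)
    (hpne : ∀ i < n, ∀ v ∈ closedBall (0:ℂ) R₀, p i v ≠ 0)
    (hPs : ∀ ℓ, 0 < ℓ → ∀ v, P ℓ v = p ℓ v / p (ℓ - 1) v)
    (a m' : ℕ) (r : ℕ → ℝ) (hrpos : ∀ k, 0 < r k) (hrR : ∀ k, r k < R₀)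
    (hrdec : ∀ k, r (k+1) < r k) (han : a + m' + 1 < n) :
    ContinuousOn
      (fun w0 : ℂ => nestedCI m' (fun k => r (k+2)) (fun z => Gfun P a m' (vcons w0 z)))
      (sphere (0:ℂ) (r 1)) := by
  rw [continuousOn_iff_continuous_restrict]
  have hcont := nestedCI_cont (X := ↥(sphere (0:ℂ) (r 1))) m' (fun k => r (k+2))
    (fun k => (hrpos (k+2)).le)
    (fun (x : ↥(sphere (0:ℂ) (r 1))) (z : ℕ → ℂ) => Gfun P a m' (vcons (↑x) z)) ?_
  · exact hcont
  · refine (Gcont hR₀ hp hpne hPs a m' r hrpos hrR hrdec han).comp ?_ ?_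
    · exact (continuous_vcons.comp
        ((continuous_subtype_val.comp continuous_fst).prodMk continuous_snd)).continuousOn
    · rintro ⟨x, z⟩ ⟨-, hz⟩
      exact vcons_mem_T x.2 hz

lemma key (hR₀ : 0 < R₀)
    (hp : ∀ i < n, ∀ v ∈ closedBall (0:ℂ) R₀, AnalyticAt ℂ (p i) v)
    (hpne : ∀ i < n, ∀ v ∈ closedBall (0:ℂ) R₀, p i v ≠ 0)
    (hPs : ∀ ℓ, 0 < ℓ → ∀ v, P ℓ v = p ℓ v / p (ℓ - 1) v) :
    ∀ (i a m : ℕ) (r : ℕ → ℝ), i < m → a + m < n →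
    (∀ k, 0 < r k) → (∀ k, r k < R₀) → (∀ k, r (k+1) < r k) →
    nestedCI (m+1) r (fun u => u 0 ^ i * p (a+i) (u 0) /
      ((∏ ℓ ∈ Finset.range m, (u ℓ - u (ℓ+1))) *
       ((u 0 * p a (u 0)) * ∏ ℓ ∈ Finset.range m, (u (ℓ+1) * P (a+1+ℓ) (u (ℓ+1)))))) = 0 := by
  intro i
  induction i with
  | zero =>
    intro a m r him han hrpos hrR hrdec
    obtain ⟨m', rfl⟩ : ∃ m', m = m'+1 := ⟨m-1, by omega⟩
    have hrle : ∀ k, 0 ≤ r k := fun k => (hrpos k).le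
    have hEq : ∀ u ∈ T (m'+1+1) r,
        u 0 ^ 0 * p (a+0) (u 0) /
          ((∏ ℓ ∈ Finset.range (m'+1), (u ℓ - u (ℓ+1))) *
           ((u 0 * p a (u 0)) * ∏ ℓ ∈ Finset.range (m'+1), (u (ℓ+1) * P (a+1+ℓ) (u (ℓ+1)))))
        = (u 0)⁻¹ * ((u 0 - u 1)⁻¹ * Gfun P a m' (fun k => u (k+1))) := by
      intro u hu
      have h0 : u 0 ≠ 0 := T_ne_zero hrpos hu (by omega)
      have h01 : u 0 - u 1 ≠ 0 := T_sub_ne hrdec hu (by omega)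
      have hpa : p a (u 0) ≠ 0 := hpne a (by omega) _ (T_mem_closedBall hR₀ hrR hu (by omega))
      have hA : (∏ ℓ ∈ Finset.range m', (u (ℓ+1) - u (ℓ+1+1))) ≠ 0 :=
        Finset.prod_ne_zero_iff.mpr fun ℓ hℓ => by
          have := Finset.mem_range.mp hℓ
          exact T_sub_ne hrdec hu (by omega)
      have hB : (∏ ℓ ∈ Finset.range (m'+1), (u (ℓ+1) * P (a+1+ℓ) (u (ℓ+1)))) ≠ 0 :=
        Finset.prod_ne_zero_iff.mpr fun ℓ hℓ => by
          have hℓm : ℓ < m'+1 := Finset.mem_range.mp hℓ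
          exact mul_ne_zero (T_ne_zero hrpos hu (by omega))
            (Pne hpne hPs (by omega) (by omega) (T_mem_closedBall hR₀ hrR hu (by omega)))
      rw [Finset.prod_range_succ' (fun ℓ => u ℓ - u (ℓ+1)) m']
      simp only [Gfun, Nat.add_zero, pow_zero, Nat.reduceAdd, one_mul]
      field_simp
    rw [nestedCI_congr (m'+1+1) r hrle _ _ hEq]
    exact eval_base m' r hrpos hrdec (Gfun P a m')
      (Kcont hR₀ hp hpne hPs a m' r hrpos hrR hrdec (by omega))
  | succ i IH =>
    intro a m r him han hrpos hrR hrdec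
    obtain ⟨m', rfl⟩ : ∃ m', m = m'+1 := ⟨m-1, by omega⟩
    have hrle : ∀ k, 0 ≤ r k := fun k => (hrpos k).le
    set f : ℂ → ℂ := fun v => v ^ i * p (a+(i+1)) v * (p a v)⁻¹ with hfdef
    have hEq : ∀ u ∈ T (m'+1+1) r,
        u 0 ^ (i+1) * p (a+(i+1)) (u 0) /
          ((∏ ℓ ∈ Finset.range (m'+1), (u ℓ - u (ℓ+1))) *
           ((u 0 * p a (u 0)) * ∏ ℓ ∈ Finset.range (m'+1), (u (ℓ+1) * P (a+1+ℓ) (u (ℓ+1)))))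
        = f (u 0) * ((u 0 - u 1)⁻¹ * Gfun P a m' (fun k => u (k+1))) := by
      intro u hu
      have h0 : u 0 ≠ 0 := T_ne_zero hrpos hu (by omega)
      have h01 : u 0 - u 1 ≠ 0 := T_sub_ne hrdec hu (by omega)
      have hpa : p a (u 0) ≠ 0 := hpne a (by omega) _ (T_mem_closedBall hR₀ hrR hu (by omega))
      have hA : (∏ ℓ ∈ Finset.range m', (u (ℓ+1) - u (ℓ+1+1))) ≠ 0 :=
        Finset.prod_ne_zero_iff.mpr fun ℓ hℓ => by
          have := Finset.mem_range.mp hℓ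
          exact T_sub_ne hrdec hu (by omega)
      have hB : (∏ ℓ ∈ Finset.range (m'+1), (u (ℓ+1) * P (a+1+ℓ) (u (ℓ+1)))) ≠ 0 :=
        Finset.prod_ne_zero_iff.mpr fun ℓ hℓ => by
          have hℓm : ℓ < m'+1 := Finset.mem_range.mp hℓ
          exact mul_ne_zero (T_ne_zero hrpos hu (by omega))
            (Pne hpne hPs (by omega) (by omega) (T_mem_closedBall hR₀ hrR hu (by omega)))
      rw [Finset.prod_range_succ' (fun ℓ => u ℓ - u (ℓ+1)) m']
      simp only [Gfun, hfdef, Nat.reduceAdd, pow_succ]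
      field_simp
    rw [nestedCI_congr (m'+1+1) r hrle _ _ hEq]
    have hf : DiffContOnCl ℂ f (ball (0:ℂ) (r 0)) := by
      have hdiff : DifferentiableOn ℂ f (closedBall (0:ℂ) (r 0)) := by
        intro v hv
        have hv' : v ∈ closedBall (0:ℂ) R₀ :=
          closedBall_subset_closedBall (hrR 0).le hv
        have : AnalyticAt ℂ f v := by
          refine AnalyticAt.mul (AnalyticAt.mul ?_ (hp (a+(i+1)) (by omega) v hv')) ?_
          · exact (analyticAt_id.pow i)
          · exact (hp a (by omega) v hv').inv (hpne a (by omega) v hv')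
        exact this.differentiableAt.differentiableWithinAt
      have hsub : closure (ball (0:ℂ) (r 0)) ⊆ closedBall (0:ℂ) (r 0) := by
        rw [closure_ball (0:ℂ) (ne_of_gt (hrpos 0))]
      exact (hdiff.mono hsub).diffContOnCl
    rw [eval_step m' r hrpos hrdec f hf (Gfun P a m')
      (Kcont hR₀ hp hpne hPs a m' r hrpos hrR hrdec (by omega))]
    have hEq2 : ∀ w ∈ T (m'+1) (fun k => r (k+1)),
        f (w 0) * Gfun P a m' w
        = w 0 ^ i * p ((a+1)+i) (w 0) /
          ((∏ ℓ ∈ Finset.range m', (w ℓ - w (ℓ+1))) *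
           ((w 0 * p (a+1) (w 0)) *
            ∏ ℓ ∈ Finset.range m', (w (ℓ+1) * P ((a+1)+1+ℓ) (w (ℓ+1))))) := by
      intro w hw
      have h0 : w 0 ≠ 0 := T_ne_zero (fun k => hrpos (k+1)) hw (by omega)
      have hw0cb : w 0 ∈ closedBall (0:ℂ) R₀ :=
        T_mem_closedBall hR₀ (fun k => hrR (k+1)) hw (by omega)
      have hpa : p a (w 0) ≠ 0 := hpne a (by omega) _ hw0cb
      have hpa1 : p (a+1) (w 0) ≠ 0 := hpne (a+1) (by omega) _ hw0cb
      have hsplit : (∏ ℓ ∈ Finset.range (m'+1), (w ℓ * P (a+1+ℓ) (w ℓ)))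
          = (∏ ℓ ∈ Finset.range m', (w (ℓ+1) * P ((a+1)+1+ℓ) (w (ℓ+1)))) *
            (w 0 * P (a+1) (w 0)) := by
        rw [Finset.prod_range_succ' (fun ℓ => w ℓ * P (a+1+ℓ) (w ℓ)) m']
        congr 1
        refine Finset.prod_congr rfl fun ℓ _ => ?_
        rw [show a+1+(ℓ+1) = a+1+1+ℓ from by omega]
      have hPa1 : P (a+1) (w 0) = p (a+1) (w 0) / p a (w 0) := by
        rw [hPs (a+1) (by omega) (w 0), show a+1-1 = a from by omega]
      have hC : (∏ ℓ ∈ Finset.range m', (w ℓ - w (ℓ+1))) ≠ 0 :=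
        Finset.prod_ne_zero_iff.mpr fun ℓ hℓ => by
          have := Finset.mem_range.mp hℓ
          exact T_sub_ne (fun k => hrdec (k+1)) hw (by omega)
      have hD : (∏ ℓ ∈ Finset.range m', (w (ℓ+1) * P ((a+1)+1+ℓ) (w (ℓ+1)))) ≠ 0 :=
        Finset.prod_ne_zero_iff.mpr fun ℓ hℓ => by
          have hℓm : ℓ < m' := Finset.mem_range.mp hℓ
          refine mul_ne_zero (T_ne_zero (fun k => hrpos (k+1)) hw (by omega)) ?_
          exact Pne hpne hPs (by omega) (by omega)
            (T_mem_closedBall hR₀ (fun k => hrR (k+1)) hw (by omega))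
      have hidx : a + (i+1) = (a+1) + i := by omega
      simp only [Gfun, hfdef, hsplit, hPa1, hidx]
      field_simp
    rw [nestedCI_congr (m'+1) (fun k => r (k+1)) (fun k => hrle (k+1)) _ _ hEq2]
    exact IH (a+1) m' (fun k => r (k+1)) (by omega) (by omega)
      (fun k => hrpos (k+1)) (fun k => hrR (k+1)) (fun k => hrdec (k+1))

end Main
end Stmt9Aux

/-- for `1 ≤ i < j ≤ n` (here `0`-based: `i < j < n`, with `j+1` integration
variables), the nested integral
`∮⋯∮ v₁^{i-1} pᵢ(v₁)/([∏_{ℓ=1}^{j-1}(v_ℓ-v_{ℓ+1})]·[∏_{ℓ=1}^j v_ℓ P_ℓ(v_ℓ)]) (dv/2πi)ʲ`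
over nested small circles `|v₁| > ⋯ > |v_j|` equals `0`. -/
theorem stmt9 (n : ℕ) (p P : ℕ → ℂ → ℂ) (R₀ : ℝ) (hR₀ : 0 < R₀)
    (hp : ∀ i < n, ∀ v ∈ Metric.closedBall (0 : ℂ) R₀, AnalyticAt ℂ (p i) v)
    (hp0 : ∀ i < n, p i 0 = 1)
    (hpne : ∀ i < n, ∀ v ∈ Metric.closedBall (0 : ℂ) R₀, p i v ≠ 0)
    (hP0 : ∀ v, P 0 v = p 0 v)
    (hPs : ∀ ℓ, 0 < ℓ → ∀ v, P ℓ v = p ℓ v / p (ℓ - 1) v)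
    (ρ : ℕ → ℝ) (hρpos : ∀ k, 0 < ρ k) (hρR : ∀ k, ρ k < R₀) (hρdec : ∀ k, ρ (k+1) < ρ k)
    (i j : ℕ) (hij : i < j) (hjn : j < n) :
    nestedCI (j + 1) ρ (fun v =>
      v 0 ^ i * p i (v 0) / ((∏ ℓ ∈ Finset.range j, (v ℓ - v (ℓ+1))) *
        ∏ ℓ ∈ Finset.range (j + 1), (v ℓ * P ℓ (v ℓ)))) = 0 := by
  have h := Stmt9Aux.key (n := n) (p := p) (P := P) (R₀ := R₀) hR₀ hp hpne hPs
    i 0 j ρ hij (by omega) hρpos hρR hρdec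
  have e : (fun v : ℕ → ℂ => v 0 ^ i * p i (v 0) /
        ((∏ ℓ ∈ Finset.range j, (v ℓ - v (ℓ+1))) *
          ∏ ℓ ∈ Finset.range (j + 1), (v ℓ * P ℓ (v ℓ))))
      = fun u => u 0 ^ i * p (0+i) (u 0) /
        ((∏ ℓ ∈ Finset.range j, (u ℓ - u (ℓ+1))) *
         ((u 0 * p 0 (u 0)) * ∏ ℓ ∈ Finset.range j, (u (ℓ+1) * P (0+1+ℓ) (u (ℓ+1))))) := by
    funext v
    rw [Finset.prod_range_succ' (fun ℓ => v ℓ * P ℓ (v ℓ)) j, hP0 (v 0),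
      show (0:ℕ)+i = i from by omega]
    rw [Finset.prod_congr rfl (fun ℓ _ => by
      rw [show (0:ℕ)+1+ℓ = ℓ+1 from by omega] :
        ∀ ℓ ∈ Finset.range j, v (ℓ+1) * P (ℓ+1) (v (ℓ+1))
          = v (ℓ+1) * P (0+1+ℓ) (v (ℓ+1)))]
    ring
  rw [e]
  exact h
end
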